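/- Symmetry of data comparison in G: for every nominal i, all path expressions α,β, and every comparison ▲ ∈ {=_c, ≠_c}, the sequent ⊢ @_i(⟨α ▲ β⟩ ↔ ⟨β ▲ α⟩) (with empty antecedent) is provable in G. -/

import Mathlib

namespace HXPathD

mutual
  inductive Path (P N M C : Type) : Type where
    | mod  : M → Path P N M C
    | nom  : N → Path P N M C
    | test : Node P N M C → Path P N M C
    | comp : Path P N M C → Path P N M C → Path P N M C

  inductive Node (P N M C : Type) : Type where
    | prop : P → Node P N M C
    | nom  : N → Node P N M C
    | bot  : Node P N M C
    | impl : Node P N M C → Node P N M C → Node P N M C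
    | at   : N → Node P N M C → Node P N M C
    | dia  : M → Node P N M C → Node P N M C
    | eq   : Path P N M C → C → Path P N M C → Node P N M C
    | neq  : Path P N M C → C → Path P N M C → Node P N M C
end

variable {P N M C : Type}

/-- Abbreviations. -/
def Node.neg (φ : Node P N M C) : Node P N M C := .impl φ .bot
def Node.top : Node P N M C := .impl .bot .bot
def Node.and (φ ψ : Node P N M C) : Node P N M C := .neg (.impl φ (.neg ψ))
def Node.iff (φ ψ : Node P N M C) : Node P N M C := .and (.impl φ ψ) (.impl ψ φ)
def Node.box (a : M) (φ : Node P N M C) : Node P N M C := .neg (.dia a (.neg φ))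
def Path.eps : Path P N M C := .test .top

/-- The node expression ⟨α⟩φ, obtained by the abbreviations
    ⟨j:⟩φ := @_jφ, ⟨ψ?⟩φ := ψ∧φ, ⟨αβ⟩φ := ⟨α⟩⟨β⟩φ (with ⟨a⟩φ primitive). -/
def Path.dia : Path P N M C → Node P N M C → Node P N M C
  | .mod a, φ => .dia a φ
  | .nom j, φ => .at j φ
  | .test ψ, φ => .and ψ φ
  | .comp α β, φ => α.dia (β.dia φ)

/-- A comparison ▲ ∈ {=_c, ≠_c : c ∈ Cmp}. -/
inductive Comparison (C : Type) : Type where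
  | ceq  : C → Comparison C
  | cneq : C → Comparison C

/-- The node expression ⟨α ▲ β⟩. -/
def Comparison.node : Comparison C → Path P N M C → Path P N M C → Node P N M C
  | .ceq c, α, β => .eq α c β
  | .cneq c, α, β => .neq α c β

/-- A hybrid data model. -/
structure Model (P N M C : Type) where
  W : Type
  nonempty : Nonempty W
  R : M → W → W → Prop
  E : C → W → W → Prop
  E_equiv : ∀ c, Equivalence (E c)
  g : N → W
  V : P → W → Prop

mutual
  def Model.satPath (𝔐 : Model P N M C) : Path P N M C → 𝔐.W → 𝔐.W → Prop
    | .mod a, n, n' => 𝔐.R a n n'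
    | .nom i, _, n' => 𝔐.g i = n'
    | .test φ, n, n' => n = n' ∧ 𝔐.sat φ n
    | .comp α β, n, n' => ∃ n'', 𝔐.satPath α n n'' ∧ 𝔐.satPath β n'' n'

  def Model.sat (𝔐 : Model P N M C) : Node P N M C → 𝔐.W → Prop
    | .prop p, n => 𝔐.V p n
    | .nom i, n => 𝔐.g i = n
    | .bot, _ => False
    | .impl φ ψ, n => 𝔐.sat φ n → 𝔐.sat ψ n
    | .at i φ, _ => 𝔐.sat φ (𝔐.g i)
    | .dia a φ, n => ∃ n', 𝔐.R a n n' ∧ 𝔐.sat φ n'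
    | .eq α c β, n => ∃ n' n'', 𝔐.satPath α n n' ∧ 𝔐.satPath β n n'' ∧ 𝔐.E c n' n''
    | .neq α c β, n => ∃ n' n'', 𝔐.satPath α n n' ∧ 𝔐.satPath β n n'' ∧ ¬ 𝔐.E c n' n''
end

mutual
  def Path.noms : Path P N M C → Set N
    | .mod _ => ∅
    | .nom i => {i}
    | .test φ => φ.noms
    | .comp α β => α.noms ∪ β.noms

  def Node.noms : Node P N M C → Set N
    | .prop _ => ∅
    | .nom i => {i}
    | .bot => ∅
    | .impl φ ψ => φ.noms ∪ ψ.noms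
    | .at i φ => insert i φ.noms
    | .dia _ φ => φ.noms
    | .eq α _ β => α.noms ∪ β.noms
    | .neq α _ β => α.noms ∪ β.noms
end

/-- Node expressions of the admissible forms for sequents:
    ⟨i: ▲ j:⟩ or @_iφ. -/
def Node.Admissible : Node P N M C → Prop
  | .at _ _ => True
  | .eq (.nom _) _ (.nom _) => True
  | .neq (.nom _) _ (.nom _) => True
  | _ => False

/-- A sequent: antecedent and consequent. -/
abbrev Sequent (P N M C : Type) := Set (Node P N M C) × Set (Node P N M C)

/-- The nominal `j` does not occur in the set `S`. -/
def FreshIn (j : N) (S : Set (Node P N M C)) : Prop := ∀ φ ∈ S, j ∉ φ.noms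

/-- Shape restriction on the axiom (Ax). -/
inductive AxForm : Node P N M C → Prop where
  | prop (i : N) (p : P) : AxForm (.at i (.prop p))
  | nom (i j : N) : AxForm (.at i (.nom j))
  | eq (i : N) (c : C) (j : N) : AxForm (.eq (.nom i) c (.nom j))

/-- Shape restriction on the rule (S1): φ is p, ⊥ or ⟨a⟩k. -/
inductive S1Form : Node P N M C → Prop where
  | prop (p : P) : S1Form (.prop p)
  | bot : S1Form .bot
  | dia (a : M) (k : N) : S1Form (.dia a (.nom k))

/-- One rule instance of the sequent calculus G: `Step cut prems concl` holds iff
    `concl` may be inferred from the premisses `prems` by a rule of G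
    (when `cut = false`, the rule (Cut) is excluded). -/
inductive Step (cut : Bool) : List (Sequent P N M C) → Sequent P N M C → Prop where
  | ax {Γ Δ : Set (Node P N M C)} {φ} (h : AxForm φ) :
      Step cut [] (insert φ Γ, insert φ Δ)
  | bot {Γ Δ : Set (Node P N M C)} (i : N) :
      Step cut [] (insert (.at i .bot) Γ, Δ)
  | implL {Γ Δ : Set (Node P N M C)} (i : N) (φ ψ : Node P N M C) :
      Step cut [(Γ, insert (.at i φ) Δ), (insert (.at i ψ) Γ, Δ)]
        (insert (.at i (.impl φ ψ)) Γ, Δ)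
  | implR {Γ Δ : Set (Node P N M C)} (i : N) (φ ψ : Node P N M C) :
      Step cut [(insert (.at i φ) Γ, insert (.at i ψ) Δ)]
        (Γ, insert (.at i (.impl φ ψ)) Δ)
  | atT {Γ Δ : Set (Node P N M C)} (i : N) :
      Step cut [(insert (.at i (.nom i)) Γ, Δ)] (Γ, Δ)
  | at5 {Γ Δ : Set (Node P N M C)} (i j k : N) :
      Step cut
        [(insert (.at j (.nom k)) (insert (.at i (.nom j)) (insert (.at i (.nom k)) Γ)), Δ)]
        (insert (.at i (.nom j)) (insert (.at i (.nom k)) Γ), Δ)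
  | nomRule {Γ Δ : Set (Node P N M C)} (i j : N)
      (hj : FreshIn j Γ) (hj' : FreshIn j Δ) :
      Step cut [(insert (.at i (.nom j)) Γ, Δ)] (Γ, Δ)
  | s1 {Γ Δ : Set (Node P N M C)} (i j : N) {φ : Node P N M C} (h : S1Form φ) :
      Step cut
        [(insert (.at j φ) (insert (.at i (.nom j)) (insert (.at i φ) Γ)), Δ)]
        (insert (.at i (.nom j)) (insert (.at i φ) Γ), Δ)
  | s2 {Γ Δ : Set (Node P N M C)} (i j k : N) (a : M) :
      Step cut
        [(insert (.at i (.dia a (.nom k)))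
            (insert (.at j (.nom k)) (insert (.at i (.dia a (.nom j))) Γ)), Δ)]
        (insert (.at j (.nom k)) (insert (.at i (.dia a (.nom j))) Γ), Δ)
  | s3 {Γ Δ : Set (Node P N M C)} (i j k : N) (c : C) :
      Step cut
        [(insert (.eq (.nom j) c (.nom k))
            (insert (.at i (.nom j)) (insert (.eq (.nom i) c (.nom k)) Γ)), Δ)]
        (insert (.at i (.nom j)) (insert (.eq (.nom i) c (.nom k)) Γ), Δ)
  | atL {Γ Δ : Set (Node P N M C)} (i j : N) (φ : Node P N M C) :
      Step cut [(insert (.at i φ) Γ, Δ)] (insert (.at j (.at i φ)) Γ, Δ)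
  | atR {Γ Δ : Set (Node P N M C)} (i j : N) (φ : Node P N M C) :
      Step cut [(Γ, insert (.at i φ) Δ)] (Γ, insert (.at j (.at i φ)) Δ)
  | diaL {Γ Δ : Set (Node P N M C)} (i j : N) (a : M) (φ : Node P N M C)
      (hj : FreshIn j (insert (.at i (.dia a φ)) Γ)) (hj' : FreshIn j Δ) :
      Step cut
        [(insert (.at i (.dia a (.nom j))) (insert (.at j φ) Γ), Δ)]
        (insert (.at i (.dia a φ)) Γ, Δ)
  | diaR {Γ Δ : Set (Node P N M C)} (i j : N) (a : M) (φ : Node P N M C) :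
      Step cut
        [(insert (.at i (.dia a (.nom j))) Γ,
          insert (.at i (.dia a φ)) (insert (.at j φ) Δ))]
        (insert (.at i (.dia a (.nom j))) Γ, insert (.at i (.dia a φ)) Δ)
  | cmpL {Γ Δ : Set (Node P N M C)} (i j k : N) (α β : Path P N M C)
      (b : Comparison C) (hjk : j ≠ k)
      (hj : FreshIn j (insert (.at i (b.node α β)) Γ)) (hj' : FreshIn j Δ)
      (hk : FreshIn k (insert (.at i (b.node α β)) Γ)) (hk' : FreshIn k Δ) :
      Step cut
        [(insert (.at i (α.dia (.nom j)))
            (insert (.at i (β.dia (.nom k)))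
              (insert (b.node (.nom j) (.nom k)) Γ)), Δ)]
        (insert (.at i (b.node α β)) Γ, Δ)
  | cmpR {Γ Δ : Set (Node P N M C)} (i j k : N) (α β : Path P N M C)
      (b : Comparison C) :
      Step cut
        [(insert (.at i (α.dia (.nom j))) (insert (.at i (β.dia (.nom k))) Γ),
          insert (.at i (b.node α β)) (insert (b.node (.nom j) (.nom k)) Δ))]
        (insert (.at i (α.dia (.nom j))) (insert (.at i (β.dia (.nom k))) Γ),
          insert (.at i (b.node α β)) Δ)
  | eqT {Γ Δ : Set (Node P N M C)} (i : N) (c : C) :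
      Step cut [(insert (.eq (.nom i) c (.nom i)) Γ, Δ)] (Γ, Δ)
  | eq5 {Γ Δ : Set (Node P N M C)} (i j k : N) (c : C) :
      Step cut
        [(insert (.eq (.nom j) c (.nom k))
            (insert (.eq (.nom i) c (.nom j)) (insert (.eq (.nom i) c (.nom k)) Γ)), Δ)]
        (insert (.eq (.nom i) c (.nom j)) (insert (.eq (.nom i) c (.nom k)) Γ), Δ)
  | neqL {Γ Δ : Set (Node P N M C)} (i j : N) (c : C) :
      Step cut [(Γ, insert (.eq (.nom i) c (.nom j)) Δ)]
        (insert (.neq (.nom i) c (.nom j)) Γ, Δ)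
  | neqR {Γ Δ : Set (Node P N M C)} (i j : N) (c : C) :
      Step cut [(insert (.eq (.nom i) c (.nom j)) Γ, Δ)]
        (Γ, insert (.neq (.nom i) c (.nom j)) Δ)
  | cutRule {Γ Δ Γ' Δ' : Set (Node P N M C)} (φ : Node P N M C)
      (ha : φ.Admissible) (hc : cut = true) :
      Step cut [(Γ, insert φ Δ), (insert φ Γ', Δ')] (Γ ∪ Γ', Δ ∪ Δ')
  | wl {Γ Δ : Set (Node P N M C)} (φ : Node P N M C) (ha : φ.Admissible) :
      Step cut [(Γ, Δ)] (insert φ Γ, Δ)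
  | wr {Γ Δ : Set (Node P N M C)} (φ : Node P N M C) (ha : φ.Admissible) :
      Step cut [(Γ, Δ)] (Γ, insert φ Δ)

/-- Derivability in G (`Deriv true`) resp. in G without (Cut) (`Deriv false`):
    a derivation built from the rules whose leaves are instances of the
    zero-premiss rules (Ax) or (⊥). -/
inductive Deriv (cut : Bool) : Sequent P N M C → Prop where
  | step {prems : List (Sequent P N M C)} {concl : Sequent P N M C}
      (h : Step cut prems concl) (ih : ∀ s ∈ prems, Deriv cut s) : Deriv cut concl

/-- Γ ⊢_G Δ : the sequent is provable in G. -/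
def ProvableG (Γ Δ : Set (Node P N M C)) : Prop := Deriv true (Γ, Δ)

/-- M ⊩ φ : global satisfaction. -/
def Model.satG (𝔐 : Model P N M C) (φ : Node P N M C) : Prop := ∀ n, 𝔐.sat φ n

/-- Validity of a sequent. -/
def ValidSeq (S : Sequent P N M C) : Prop :=
  ∀ 𝔐 : Model P N M C, (∀ γ ∈ S.1, 𝔐.satG γ) → ∃ δ ∈ S.2, 𝔐.satG δ

/-- Formulas of the basic hybrid logic H(@): no data comparisons. -/
def Node.IsHybrid : Node P N M C → Prop
  | .prop _ => True
  | .nom _ => True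
  | .bot => True
  | .impl φ ψ => φ.IsHybrid ∧ ψ.IsHybrid
  | .at _ φ => φ.IsHybrid
  | .dia _ φ => φ.IsHybrid
  | .eq _ _ _ => False
  | .neq _ _ _ => False

section Aux
variable {P N M C : Type}

mutual
  theorem Path.noms_finite : ∀ γ : Path P N M C, γ.noms.Finite
    | .mod _ => by simpa [Path.noms] using Set.finite_empty
    | .nom _ => by simpa [Path.noms] using Set.finite_singleton _
    | .test φ => by simpa [Path.noms] using Node.noms_finite φ
    | .comp α β => by
        simpa [Path.noms] using (Path.noms_finite α).union (Path.noms_finite β)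

  theorem Node.noms_finite : ∀ φ : Node P N M C, φ.noms.Finite
    | .prop _ => by simpa [Node.noms] using Set.finite_empty
    | .nom _ => by simpa [Node.noms] using Set.finite_singleton _
    | .bot => by simpa [Node.noms] using Set.finite_empty
    | .impl φ ψ => by
        simpa [Node.noms] using (Node.noms_finite φ).union (Node.noms_finite ψ)
    | .at x φ => by simpa [Node.noms] using (Node.noms_finite φ).insert x
    | .dia _ φ => by simpa [Node.noms] using Node.noms_finite φ
    | .eq α _ β => by
        simpa [Node.noms] using (Path.noms_finite α).union (Path.noms_finite β)
    | .neq α _ β => by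
        simpa [Node.noms] using (Path.noms_finite α).union (Path.noms_finite β)
end

theorem Comparison.node_noms (b : Comparison C) (α β : Path P N M C) :
    (b.node α β).noms = α.noms ∪ β.noms := by
  cases b <;> rfl

theorem Deriv.step0 {cut} {concl : Sequent P N M C} (h : Step cut [] concl) :
    Deriv cut concl :=
  Deriv.step h (by simp)

theorem Deriv.step1 {cut} {s concl : Sequent P N M C} (h : Step cut [s] concl)
    (d : Deriv cut s) : Deriv cut concl :=
  Deriv.step h (by rintro t ht; simp at ht; subst ht; exact d)

theorem Deriv.step2 {cut} {s₁ s₂ concl : Sequent P N M C}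
    (h : Step cut [s₁, s₂] concl) (d₁ : Deriv cut s₁) (d₂ : Deriv cut s₂) :
    Deriv cut concl :=
  Deriv.step h (by rintro t ht; simp at ht; rcases ht with h | h <;> subst h
                   exacts [d₁, d₂])

theorem Deriv.cast {cut} {S T : Sequent P N M C} (h : Deriv cut S) (e : S = T) :
    Deriv cut T := e ▸ h

/-- Key lemma: @_i⟨α▲β⟩ ⊢ @_i⟨β▲α⟩, @_i⊥ is derivable. -/
theorem derivKey [Infinite N] (i : N) (α β : Path P N M C) (b : Comparison C) :
    Deriv true
      (({Node.at i (b.node α β)} : Set (Node P N M C)),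
       ({Node.at i (b.node β α), Node.at i .bot} : Set (Node P N M C))) := by
  -- choose fresh nominals j, k
  set S : Set N := insert i (α.noms ∪ β.noms) with hS
  have hSfin : S.Finite :=
    ((α.noms_finite).union (β.noms_finite)).insert i
  obtain ⟨j, hj⟩ := hSfin.infinite_compl.nonempty
  obtain ⟨k, hk⟩ := ((hSfin.insert j).infinite_compl).nonempty
  have hjS : j ∉ S := hj
  have hkS : k ∉ S := fun h => hk (Set.mem_insert_iff.mpr (Or.inr h))
  have hkj : k ≠ j := fun h => hk (by simp [h])
  have hjk : j ≠ k := fun h => hkj h.symm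
  -- abbreviations
  set A : Node P N M C := b.node α β with hA
  set B : Node P N M C := b.node β α with hB
  set Ai : Node P N M C := .at i A with hAi
  set Bi : Node P N M C := .at i B with hBi
  set boti : Node P N M C := .at i .bot with hboti
  set X : Node P N M C := .at i (α.dia (.nom j)) with hX
  set Y : Node P N M C := .at i (β.dia (.nom k)) with hY
  set Z : Node P N M C := b.node (.nom j) (.nom k) with hZ
  set Z' : Node P N M C := b.node (.nom k) (.nom j) with hZ'
  -- freshness facts
  have freshA : ∀ m : N, m ∉ S → m ∉ Ai.noms := by
    intro m hm
    simp only [hAi, Node.noms, hA, Comparison.node_noms]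
    simpa [hS, Set.mem_insert_iff] using hm
  have freshB : ∀ m : N, m ∉ S → m ∉ Bi.noms := by
    intro m hm
    simp only [hBi, Node.noms, hB, Comparison.node_noms]
    intro h
    apply hm
    simp only [hS, Set.mem_insert_iff, Set.mem_union] at h ⊢
    tauto
  have freshbot : ∀ m : N, m ∉ S → m ∉ boti.noms := by
    intro m hm
    simp only [hboti, Node.noms]
    intro h
    apply hm
    simp only [hS, Set.mem_insert_iff] at h ⊢
    rcases h with h | h
    · exact Or.inl h
    · exact absurd h (Set.notMem_empty m)
  have freshL : ∀ m : N, m ∉ S → FreshIn m (insert Ai (∅ : Set (Node P N M C))) := by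
    intro m hm φ hφ
    simp only [Set.mem_insert_iff, Set.mem_empty_iff_false, or_false] at hφ
    subst hφ; exact freshA m hm
  have freshR : ∀ m : N, m ∉ S →
      FreshIn m ({Bi, boti} : Set (Node P N M C)) := by
    intro m hm φ hφ
    simp only [Set.mem_insert_iff, Set.mem_singleton_iff] at hφ
    rcases hφ with h | h <;> subst h
    · exact freshB m hm
    · exact freshbot m hm
  -- the derivation, bottom-up
  -- final sequent after cmpR-premiss, by cases on b
  have dtop : Deriv true
      ((insert Y (insert X ({Z} : Set (Node P N M C)))),
       insert Bi (insert Z' ({boti} : Set (Node P N M C)))) := by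
    cases b with
    | ceq c =>
      -- Z = eq j c k, Z' = eq k c j
      apply Deriv.step1 (Step.eqT (Γ := insert Y (insert X {Z})) j c)
      have e1 : insert (Node.eq (.nom j) c (.nom j)) (insert Y (insert X ({Z} : Set (Node P N M C))))
          = insert (Node.eq (.nom j) c (.nom k))
              (insert (Node.eq (.nom j) c (.nom j)) ({Y, X} : Set (Node P N M C))) := by
        simp only [hZ, Comparison.node]
        ext φ; simp [Set.mem_insert_iff]; tauto
      rw [e1]
      apply Deriv.step1 (Step.eq5 (Γ := {Y, X}) j k j c)
      have e2 : (insert Bi (insert Z' ({boti} : Set (Node P N M C))))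
          = insert (Node.eq (.nom k) c (.nom j)) (insert Bi ({boti} : Set (Node P N M C))) := by
        simp only [hZ', Comparison.node]
        ext φ; simp [Set.mem_insert_iff]; tauto
      rw [e2]
      exact Deriv.step0 (Step.ax (AxForm.eq k c j))
    | cneq c =>
      -- Z = neq j c k, Z' = neq k c j
      have e0 : (insert Bi (insert Z' ({boti} : Set (Node P N M C))))
          = insert (Node.neq (.nom k) c (.nom j)) (insert Bi ({boti} : Set (Node P N M C))) := by
        simp only [hZ', Comparison.node]
        ext φ; simp [Set.mem_insert_iff]; tauto
      rw [e0]
      apply Deriv.step1 (Step.neqR (Γ := insert Y (insert X {Z}))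
        (Δ := insert Bi {boti}) k j c)
      have e1 : insert (Node.eq (.nom k) c (.nom j)) (insert Y (insert X ({Z} : Set (Node P N M C))))
          = insert (Node.neq (.nom j) c (.nom k))
              (insert (Node.eq (.nom k) c (.nom j)) ({Y, X} : Set (Node P N M C))) := by
        simp only [hZ, Comparison.node]
        ext φ; simp [Set.mem_insert_iff]; tauto
      rw [e1]
      apply Deriv.step1 (Step.neqL (Γ := insert (Node.eq (.nom k) c (.nom j)) {Y, X})
        (Δ := insert Bi {boti}) j k c)
      apply Deriv.step1 (Step.eqT
        (Γ := insert (Node.eq (.nom k) c (.nom j)) {Y, X})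
        (Δ := insert (Node.eq (.nom j) c (.nom k)) (insert Bi {boti})) k c)
      have e2 : insert (Node.eq (.nom k) c (.nom k))
            (insert (Node.eq (.nom k) c (.nom j)) ({Y, X} : Set (Node P N M C)))
          = insert (Node.eq (.nom k) c (.nom j))
              (insert (Node.eq (.nom k) c (.nom k)) ({Y, X} : Set (Node P N M C))) := by
        rw [Set.insert_comm]
      rw [e2]
      apply Deriv.step1 (Step.eq5 (Γ := {Y, X}) k j k c)
      exact Deriv.step0 (Step.ax (AxForm.eq j c k))
  -- cmpR step
  have dP1 : Deriv true
      ((insert X (insert Y ({Z} : Set (Node P N M C)))), ({Bi, boti} : Set (Node P N M C))) := by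
    have econ : (insert X (insert Y ({Z} : Set (Node P N M C))))
        = insert Y (insert X ({Z} : Set (Node P N M C))) := Set.insert_comm _ _ _
    rw [econ]
    exact Deriv.step1 (Step.cmpR (Γ := {Z}) (Δ := {boti}) i k j β α b) dtop
  -- cmpL step
  refine Deriv.cast (Deriv.step1
    (Step.cmpL (Γ := (∅ : Set (Node P N M C))) (Δ := {Bi, boti}) i j k α β b hjk
      (freshL j hjS) (freshR j hjS) (freshL k hkS) (freshR k hkS))
      (Deriv.cast dP1 (by congr 1; simp [X, Y, Z]))) ?_
  congr 1
  simp [Ai, A]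

end Aux

/-- symmetry of data comparison in G: ⊢ @_i(⟨α ▲ β⟩ ↔ ⟨β ▲ α⟩). -/
theorem cmp_symm_provable {P N M C : Type} [Countable P] [Infinite P] [Countable N] [Infinite N] [Finite M] [Finite C]
    (i : N) (α β : Path P N M C) (b : Comparison C) :
    ProvableG (∅ : Set (Node P N M C))
      {Node.at i (Node.iff (b.node α β) (b.node β α))} := by
  show Deriv true _
  set A : Node P N M C := b.node α β with hA
  set B : Node P N M C := b.node β α with hB
  have key1 := derivKey i α β b
  have key2 := derivKey i β α b
  -- @_i(iff A B) = @_i(((A→B) → ((B→A)→⊥)) → ⊥)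
  have sub2 : Deriv true
      ((insert (Node.at i .bot) (∅ : Set (Node P N M C))),
       ({Node.at i .bot} : Set (Node P N M C))) :=
    Deriv.step0 (Step.bot (Γ := (∅ : Set (Node P N M C))) (Δ := {Node.at i .bot}) i)
  have sub1 : Deriv true
      ((∅ : Set (Node P N M C)),
       insert (Node.at i (.impl B A)) ({Node.at i .bot} : Set (Node P N M C))) :=
    Deriv.step1 (Step.implR (Γ := ∅) (Δ := {Node.at i .bot}) i B A)
      (Deriv.cast key2 (by congr 1; simp [B]))
  have prem2 : Deriv true
      ((insert (Node.at i (.impl (.impl B A) .bot)) (∅ : Set (Node P N M C))),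
       ({Node.at i .bot} : Set (Node P N M C))) :=
    Deriv.step2 (Step.implL (Γ := ∅) (Δ := {Node.at i .bot}) i (.impl B A) .bot) sub1 sub2
  have prem1 : Deriv true
      ((∅ : Set (Node P N M C)),
       insert (Node.at i (.impl A B)) ({Node.at i .bot} : Set (Node P N M C))) :=
    Deriv.step1 (Step.implR (Γ := ∅) (Δ := {Node.at i .bot}) i A B)
      (Deriv.cast key1 (by congr 1; simp [A]))
  have main : Deriv true
      ((insert (Node.at i (.impl (.impl A B) (.impl (.impl B A) .bot))) (∅ : Set (Node P N M C))),
       ({Node.at i .bot} : Set (Node P N M C))) :=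
    Deriv.step2 (Step.implL (Γ := ∅) (Δ := {Node.at i .bot}) i
      (.impl A B) (.impl (.impl B A) .bot)) prem1 prem2
  refine Deriv.cast (Deriv.step1 (Step.implR (Γ := ∅) (Δ := ∅) i
    (.impl (.impl A B) (.impl (.impl B A) .bot)) .bot)
    (Deriv.cast main (by congr 1; simp))) ?_
  congr 1
  simp [Node.iff, Node.and, Node.neg]


end HXPathD
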